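/- arXiv:1409.4292 — 5 statements merged into one kernel-verified Lean document; each statement's English description precedes it below -/
import Mathlib

section
/- Let n ≥ 1, let A be a symmetric n×n real matrix, ω a skew-symmetric n×n real matrix, d, N ∈ ℝⁿ, and let μ₁, μ₂, μ₃, μ₅, μ₆ be real numbers. Set λ₁ := μ₂−μ₃, λ₂ := μ₅−μ₆ and ρ := λ₁N + λ₂(Ad), and let σ := μ₁(dᵀAd)(d⊗d) + μ₂(N⊗d) + μ₃(d⊗N) + μ₅((Ad)⊗d) + μ₆(d⊗(Ad)). Then ⟨σ, A+ω⟩_F − ⟨ωd, ρ⟩ = μ₁(dᵀAd)² + (μ₂+μ₃)⟨N, Ad⟩ + (μ₅+μ₆)|Ad|²; in particular all terms involving the skew-symmetric part ω cancel. -/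
open Matrix BigOperators

lemma contract_vecMulVec {n : ℕ} (x y : Fin n → ℝ) (M : Matrix (Fin n) (Fin n) ℝ) :
    ∑ i, ∑ j, vecMulVec x y i j * M i j = x ⬝ᵥ M.mulVec y := by
  simp only [vecMulVec_apply, dotProduct, mulVec, Finset.mul_sum]
  exact Finset.sum_congr rfl fun i _ => Finset.sum_congr rfl fun j _ => by ring

lemma flip_dot {n : ℕ} (M : Matrix (Fin n) (Fin n) ℝ) (x y : Fin n → ℝ) :
    x ⬝ᵥ M.mulVec y = y ⬝ᵥ Mᵀ.mulVec x := by
  rw [dotProduct_mulVec, dotProduct_comm, mulVec_transpose]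

/-- In the Ericksen–Leslie energy law the contraction of the Leslie stress
with the velocity gradient, corrected by the rotation term `⟨ωd, ρ⟩` with
`ρ = lam₁ N + lam₂ A d`, contains no contribution from the skew-symmetric part
`ω`. -/
theorem leslie_stress_rotation_cancellation
    (n : ℕ) (hn : 1 ≤ n)
    (A ω : Matrix (Fin n) (Fin n) ℝ)
    (hA : Aᵀ = A) (hω : ωᵀ = -ω)
    (d N : Fin n → ℝ) (μ₁ μ₂ μ₃ μ₅ μ₆ lam₁ lam₂ : ℝ)
    (hlam₁ : lam₁ = μ₂ - μ₃) (hlam₂ : lam₂ = μ₅ - μ₆) :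
    (∑ i, ∑ j,
      ((μ₁ * (d ⬝ᵥ A.mulVec d)) • vecMulVec d d + μ₂ • vecMulVec N d
        + μ₃ • vecMulVec d N + μ₅ • vecMulVec (A.mulVec d) d
        + μ₆ • vecMulVec d (A.mulVec d)) i j * (A + ω) i j)
      - ω.mulVec d ⬝ᵥ (lam₁ • N + lam₂ • A.mulVec d)
      = μ₁ * (d ⬝ᵥ A.mulVec d) ^ 2 + (μ₂ + μ₃) * (N ⬝ᵥ A.mulVec d)
        + (μ₅ + μ₆) * (A.mulVec d ⬝ᵥ A.mulVec d) := by
  have hAsym : ∀ x y : Fin n → ℝ, x ⬝ᵥ A.mulVec y = y ⬝ᵥ A.mulVec x := by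
    intro x y; rw [flip_dot, hA]
  have hωskew : ∀ x y : Fin n → ℝ, x ⬝ᵥ ω.mulVec y = -(y ⬝ᵥ ω.mulVec x) := by
    intro x y; rw [flip_dot, hω, neg_mulVec, dotProduct_neg]
  have hωd : ∀ x : Fin n → ℝ, ω.mulVec d ⬝ᵥ x = x ⬝ᵥ ω.mulVec d := by
    intro x; rw [dotProduct_comm]
  have hexp : (∑ i, ∑ j,
      ((μ₁ * (d ⬝ᵥ A.mulVec d)) • vecMulVec d d + μ₂ • vecMulVec N d
        + μ₃ • vecMulVec d N + μ₅ • vecMulVec (A.mulVec d) d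
        + μ₆ • vecMulVec d (A.mulVec d)) i j * (A + ω) i j)
      = (μ₁ * (d ⬝ᵥ A.mulVec d)) * (d ⬝ᵥ (A + ω).mulVec d)
        + μ₂ * (N ⬝ᵥ (A + ω).mulVec d) + μ₃ * (d ⬝ᵥ (A + ω).mulVec N)
        + μ₅ * (A.mulVec d ⬝ᵥ (A + ω).mulVec d)
        + μ₆ * (d ⬝ᵥ (A + ω).mulVec (A.mulVec d)) := by
    simp only [Matrix.add_apply, Matrix.smul_apply, smul_eq_mul, add_mul, mul_assoc,
      Finset.sum_add_distrib, ← Finset.mul_sum, contract_vecMulVec]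
    simp only [← Matrix.add_apply A ω, contract_vecMulVec]
  rw [hexp]
  simp only [add_mulVec, mulVec_add, dotProduct_add, add_dotProduct, smul_dotProduct,
    dotProduct_smul, smul_eq_mul, hωd]
  have h1 : d ⬝ᵥ ω.mulVec d = 0 := by
    have := hωskew d d; linarith
  have h2 : d ⬝ᵥ ω.mulVec N = -(N ⬝ᵥ ω.mulVec d) := hωskew d N
  have h3 : d ⬝ᵥ ω.mulVec (A.mulVec d) = -(A.mulVec d ⬝ᵥ ω.mulVec d) :=
    hωskew d (A.mulVec d)
  have h4 : d ⬝ᵥ A.mulVec N = N ⬝ᵥ A.mulVec d := hAsym d N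
  have h5 : d ⬝ᵥ A.mulVec (A.mulVec d) = A.mulVec d ⬝ᵥ A.mulVec d :=
    hAsym d (A.mulVec d)
  rw [h1, h2, h3, h4, h5, hlam₁, hlam₂]
  ring
end

section
/- Let n ≥ 1, let A be a symmetric n×n real matrix, ω a skew-symmetric n×n real matrix, d, N ∈ ℝⁿ, and let μ₁, μ₂, μ₃, μ₅, μ₆ be real numbers satisfying Parodi's relation μ₂ + μ₃ = μ₆ − μ₅ and such that λ₁ := μ₂ − μ₃ ≠ 0. Set λ₂ := μ₅ − μ₆, ρ := λ₁N + λ₂(Ad), and σ := μ₁(dᵀAd)(d⊗d) + μ₂(N⊗d) + μ₃(d⊗N) + μ₅((Ad)⊗d) + μ₆(d⊗(Ad)). Then ⟨σ, A+ω⟩_F − ⟨ωd, ρ⟩ + (λ₂/λ₁)⟨Ad, ρ⟩ = μ₁(dᵀAd)² + (μ₅ + μ₆ + λ₂²/λ₁)|Ad|². Consequently, if in addition λ₁ < 0, μ₁ ≥ 0 and λ₂²/(−λ₁) ≤ μ₅ + μ₆, this quantity is nonnegative. -/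
open Matrix BigOperators

/-- Pointwise content of the energy identity (en-case1) in Case 1 (with
Parodi's relation) for the regularized Ericksen–Leslie system, together with
the nonnegativity of the Leslie dissipation under the coefficient
conditions. -/
theorem leslie_dissipation_parodi
    (n : ℕ) (hn : 1 ≤ n)
    (A ω : Matrix (Fin n) (Fin n) ℝ)
    (hA : Aᵀ = A) (hω : ωᵀ = -ω)
    (d N : Fin n → ℝ) (μ₁ μ₂ μ₃ μ₅ μ₆ lam₁ lam₂ : ℝ)
    (hlam₁ : lam₁ = μ₂ - μ₃) (hlam₂ : lam₂ = μ₅ - μ₆)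
    (hParodi : μ₂ + μ₃ = μ₆ - μ₅) (hlam₁ne : lam₁ ≠ 0) :
    ((∑ i, ∑ j,
      ((μ₁ * (d ⬝ᵥ A.mulVec d)) • vecMulVec d d + μ₂ • vecMulVec N d
        + μ₃ • vecMulVec d N + μ₅ • vecMulVec (A.mulVec d) d
        + μ₆ • vecMulVec d (A.mulVec d)) i j * (A + ω) i j)
      - ω.mulVec d ⬝ᵥ (lam₁ • N + lam₂ • A.mulVec d)
      + (lam₂ / lam₁) * (A.mulVec d ⬝ᵥ (lam₁ • N + lam₂ • A.mulVec d))
      = μ₁ * (d ⬝ᵥ A.mulVec d) ^ 2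
        + (μ₅ + μ₆ + lam₂ ^ 2 / lam₁) * (A.mulVec d ⬝ᵥ A.mulVec d))
    ∧ (lam₁ < 0 → 0 ≤ μ₁ → lam₂ ^ 2 / (-lam₁) ≤ μ₅ + μ₆ →
        0 ≤ μ₁ * (d ⬝ᵥ A.mulVec d) ^ 2
          + (μ₅ + μ₆ + lam₂ ^ 2 / lam₁) * (A.mulVec d ⬝ᵥ A.mulVec d)) := by
  have frob : ∀ (c : ℝ) (a b : Fin n → ℝ),
      (∑ i, ∑ j, c * (a i * b j) * (A i j + ω i j))
        = c * (a ⬝ᵥ (A + ω).mulVec b) := by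
    intro c a b
    simp only [dotProduct, mulVec, Matrix.add_apply, Finset.mul_sum]
    exact Finset.sum_congr rfl fun i _ => Finset.sum_congr rfl fun j _ => by ring
  have hAsym : ∀ x y : Fin n → ℝ, x ⬝ᵥ A.mulVec y = A.mulVec x ⬝ᵥ y := by
    intro x y
    rw [dotProduct_mulVec, ← hA, mulVec_transpose, hA]
  have hωskew : ∀ x y : Fin n → ℝ, x ⬝ᵥ ω.mulVec y = -(ω.mulVec x ⬝ᵥ y) := by
    intro x y
    rw [dotProduct_mulVec, ← mulVec_transpose, hω, neg_mulVec, neg_dotProduct]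
  have hdωd : d ⬝ᵥ ω.mulVec d = 0 := by
    have h := hωskew d d
    have h2 : ω.mulVec d ⬝ᵥ d = d ⬝ᵥ ω.mulVec d := dotProduct_comm _ _
    linarith
  have hsum : (∑ i, ∑ j,
      ((μ₁ * (d ⬝ᵥ A.mulVec d)) • vecMulVec d d + μ₂ • vecMulVec N d
        + μ₃ • vecMulVec d N + μ₅ • vecMulVec (A.mulVec d) d
        + μ₆ • vecMulVec d (A.mulVec d)) i j * (A + ω) i j)
      = (μ₁ * (d ⬝ᵥ A.mulVec d)) * (d ⬝ᵥ (A + ω).mulVec d)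
        + μ₂ * (N ⬝ᵥ (A + ω).mulVec d)
        + μ₃ * (d ⬝ᵥ (A + ω).mulVec N)
        + μ₅ * (A.mulVec d ⬝ᵥ (A + ω).mulVec d)
        + μ₆ * (d ⬝ᵥ (A + ω).mulVec (A.mulVec d)) := by
    simp only [Matrix.add_apply, Matrix.smul_apply, vecMulVec_apply, smul_eq_mul,
      add_mul, Finset.sum_add_distrib]
    rw [frob, frob, frob, frob, frob]
  constructor
  · rw [hsum]
    simp only [add_mulVec, dotProduct_add, dotProduct_smul, smul_eq_mul,
      smul_dotProduct]
    have e1 : d ⬝ᵥ ω.mulVec N = -(ω.mulVec d ⬝ᵥ N) := hωskew d N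
    have e2 : d ⬝ᵥ A.mulVec N = A.mulVec d ⬝ᵥ N := hAsym d N
    have e3 : d ⬝ᵥ A.mulVec (A.mulVec d) = A.mulVec d ⬝ᵥ A.mulVec d :=
      hAsym d (A.mulVec d)
    have e4 : d ⬝ᵥ ω.mulVec (A.mulVec d) = -(ω.mulVec d ⬝ᵥ A.mulVec d) :=
      hωskew d (A.mulVec d)
    have e5 : N ⬝ᵥ A.mulVec d = A.mulVec d ⬝ᵥ N := dotProduct_comm _ _
    have e6 : N ⬝ᵥ ω.mulVec d = ω.mulVec d ⬝ᵥ N := dotProduct_comm _ _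
    have e7 : A.mulVec d ⬝ᵥ ω.mulVec d = ω.mulVec d ⬝ᵥ A.mulVec d :=
      dotProduct_comm _ _
    rw [e1, e2, e3, e4, e5, e6, e7, hdωd]
    have hμ₃ : μ₃ = μ₆ - μ₅ - μ₂ := by linarith
    subst hlam₁ hlam₂ hμ₃
    field_simp
    ring
  · intro h1 h2 h3
    have hq : 0 ≤ A.mulVec d ⬝ᵥ A.mulVec d := by
      apply Finset.sum_nonneg
      intro i _
      exact mul_self_nonneg _
    have hc : 0 ≤ μ₅ + μ₆ + lam₂ ^ 2 / lam₁ := by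
      have : lam₂ ^ 2 / lam₁ = -(lam₂ ^ 2 / (-lam₁)) := by
        field_simp
      linarith
    have := mul_nonneg h2 (sq_nonneg (d ⬝ᵥ A.mulVec d))
    nlinarith [mul_nonneg hc hq]
end

section
/- Let n ≥ 1, let A be a symmetric n×n real matrix, ω a skew-symmetric n×n real matrix, d, N ∈ ℝⁿ, and let μ₁, μ₂, μ₃, μ₅, μ₆ be real numbers with λ₁ := μ₂ − μ₃ ≠ 0. Set λ₂ := μ₅ − μ₆, ρ := λ₁N + λ₂(Ad), and σ := μ₁(dᵀAd)(d⊗d) + μ₂(N⊗d) + μ₃(d⊗N) + μ₅((Ad)⊗d) + μ₆(d⊗(Ad)). Then the total dissipation satisfies the exact identity ⟨σ, A+ω⟩_F − ⟨ωd, ρ⟩ + (λ₂/λ₁)⟨Ad, ρ⟩ − (1/λ₁)|ρ|² = −λ₁|N|² − (λ₂ − μ₂ − μ₃)⟨N, Ad⟩ + (μ₅+μ₆)|Ad|² + μ₁(dᵀAd)². -/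
open Matrix BigOperators

/-- Pointwise basis for the energy inequality (en-case2) in Case 2 (without
Parodi's relation) of the regularized Ericksen–Leslie system: exact form of
the total dissipation. -/
theorem leslie_dissipation_no_parodi
    (n : ℕ) (hn : 1 ≤ n)
    (A ω : Matrix (Fin n) (Fin n) ℝ)
    (hA : Aᵀ = A) (hω : ωᵀ = -ω)
    (d N : Fin n → ℝ) (μ₁ μ₂ μ₃ μ₅ μ₆ lam₁ lam₂ : ℝ)
    (hlam₁ : lam₁ = μ₂ - μ₃) (hlam₂ : lam₂ = μ₅ - μ₆) (hlam₁ne : lam₁ ≠ 0) :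
    (∑ i, ∑ j,
      ((μ₁ * (d ⬝ᵥ A.mulVec d)) • vecMulVec d d + μ₂ • vecMulVec N d
        + μ₃ • vecMulVec d N + μ₅ • vecMulVec (A.mulVec d) d
        + μ₆ • vecMulVec d (A.mulVec d)) i j * (A + ω) i j)
      - ω.mulVec d ⬝ᵥ (lam₁ • N + lam₂ • A.mulVec d)
      + (lam₂ / lam₁) * (A.mulVec d ⬝ᵥ (lam₁ • N + lam₂ • A.mulVec d))
      - (1 / lam₁) * ((lam₁ • N + lam₂ • A.mulVec d) ⬝ᵥ (lam₁ • N + lam₂ • A.mulVec d))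
      = -lam₁ * (N ⬝ᵥ N) - (lam₂ - μ₂ - μ₃) * (N ⬝ᵥ A.mulVec d)
        + (μ₅ + μ₆) * (A.mulVec d ⬝ᵥ A.mulVec d)
        + μ₁ * (d ⬝ᵥ A.mulVec d) ^ 2 := by
  have frob : ∀ (a b : Fin n → ℝ) (M : Matrix (Fin n) (Fin n) ℝ),
      ∑ i, ∑ j, vecMulVec a b i j * M i j = a ⬝ᵥ M.mulVec b := by
    intro a b M
    simp only [vecMulVec_apply, dotProduct, mulVec, Finset.mul_sum]
    refine Finset.sum_congr rfl fun i _ => Finset.sum_congr rfl fun j _ => ?_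
    ring
  have dsym : ∀ (M : Matrix (Fin n) (Fin n) ℝ) (x y : Fin n → ℝ),
      x ⬝ᵥ M.mulVec y = y ⬝ᵥ Mᵀ.mulVec x := by
    intro M x y
    simp only [dotProduct, mulVec, transpose_apply, Finset.mul_sum]
    rw [Finset.sum_comm]
    refine Finset.sum_congr rfl fun i _ => Finset.sum_congr rfl fun j _ => ?_
    ring
  have hsym : ∀ x y : Fin n → ℝ, x ⬝ᵥ A.mulVec y = y ⬝ᵥ A.mulVec x := by
    intro x y; rw [dsym, hA]
  have hskew : ∀ x y : Fin n → ℝ, x ⬝ᵥ ω.mulVec y = -(y ⬝ᵥ ω.mulVec x) := by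
    intro x y; rw [dsym, hω, Matrix.neg_mulVec, dotProduct_neg]
  have hskew0 : d ⬝ᵥ ω.mulVec d = 0 := by
    have := hskew d d; linarith
  have hsym1 : d ⬝ᵥ A.mulVec N = N ⬝ᵥ A.mulVec d := hsym d N
  have hsym2 : d ⬝ᵥ A.mulVec (A.mulVec d) = A.mulVec d ⬝ᵥ A.mulVec d := hsym d (A.mulVec d)
  have hskew1 : d ⬝ᵥ ω.mulVec N = -(N ⬝ᵥ ω.mulVec d) := hskew d N
  have hskew2 : d ⬝ᵥ ω.mulVec (A.mulVec d) = -(A.mulVec d ⬝ᵥ ω.mulVec d) :=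
    hskew d (A.mulVec d)
  have hc1 : ω.mulVec d ⬝ᵥ N = N ⬝ᵥ ω.mulVec d := dotProduct_comm _ _
  have hc2 : ω.mulVec d ⬝ᵥ A.mulVec d = A.mulVec d ⬝ᵥ ω.mulVec d := dotProduct_comm _ _
  have hc3 : A.mulVec d ⬝ᵥ N = N ⬝ᵥ A.mulVec d := dotProduct_comm _ _
  simp only [Matrix.add_apply, Matrix.smul_apply, smul_eq_mul, add_mul, mul_add,
    Finset.sum_add_distrib, mul_assoc, ← Finset.mul_sum, frob]
  simp only [dotProduct_add, add_dotProduct, dotProduct_smul,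
    smul_dotProduct, smul_eq_mul]
  rw [hsym1, hsym2, hskew0, hskew1, hskew2, hc1, hc2, hc3]
  field_simp
  subst hlam₁ hlam₂
  ring
end

section
/- Let y : [0,∞) → [0,∞) be absolutely continuous and integrable on (0,∞), and suppose there exist a constant C ≥ 0 and a nonnegative integrable function Λ ∈ L¹(0,∞) such that y′(t) ≤ C + Λ(t) for almost every t ≥ 0. Then y(t) → 0 as t → ∞. -/
open MeasureTheory intervalIntegral

/-- Tail smallness: for an integrable function on `(0,∞)`, integrals over
intervals far to the right are small. -/
lemma tail_small (f : ℝ → ℝ) (hf : IntegrableOn f (Set.Ioi 0))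
    (η : ℝ) (hη : 0 < η) :
    ∃ T : ℝ, 0 ≤ T ∧ ∀ s t : ℝ, T ≤ s → s ≤ t → ∫ r in s..t, f r < η := by
  have hT := MeasureTheory.intervalIntegral_tendsto_integral_Ioi 0 hf
    (Filter.tendsto_id (α := ℝ))
  rw [Metric.tendsto_atTop] at hT
  obtain ⟨N, hN⟩ := hT (η / 2) (by positivity)
  refine ⟨max N 0, le_max_right _ _, fun s t hs hst => ?_⟩
  have hs0 : (0 : ℝ) ≤ s := le_trans (le_max_right N 0) hs
  have ht0 : (0 : ℝ) ≤ t := le_trans hs0 hst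
  have hsN : N ≤ s := le_trans (le_max_left N 0) hs
  have htN : N ≤ t := le_trans hsN hst
  have hint1 : IntervalIntegrable f volume 0 s := by
    rw [intervalIntegrable_iff]
    refine hf.mono_set ?_
    rw [Set.uIoc_of_le hs0]
    exact Set.Ioc_subset_Ioi_self
  have hint2 : IntervalIntegrable f volume s t := by
    rw [intervalIntegrable_iff]
    refine hf.mono_set ?_
    rw [Set.uIoc_of_le hst]
    exact fun x hx => lt_of_le_of_lt hs0 hx.1
  have hadd : (∫ r in (0:ℝ)..s, f r) + ∫ r in s..t, f r = ∫ r in (0:ℝ)..t, f r :=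
    intervalIntegral.integral_add_adjacent_intervals hint1 hint2
  have h1 := hN s hsN
  have h2 := hN t htN
  rw [Real.dist_eq] at h1 h2
  have h1' := abs_lt.mp h1
  have h2' := abs_lt.mp h2
  simp only [id_eq] at h1' h2'
  linarith [h1'.1, h1'.2, h2'.1, h2'.2]

/-- Decay lemma: an absolutely continuous, nonnegative, integrable function
on `(0,∞)` whose derivative is bounded above by `C + Λ(t)` with `Λ`
nonnegative and integrable tends to `0` at infinity. -/
theorem integrable_decay_to_zero
    (y y' Λ : ℝ → ℝ) (C : ℝ) (hC : 0 ≤ C)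
    (hy_nonneg : ∀ t : ℝ, 0 ≤ t → 0 ≤ y t)
    (hy'_int : ∀ s t : ℝ, 0 ≤ s → s ≤ t → IntervalIntegrable y' volume s t)
    (hFTC : ∀ s t : ℝ, 0 ≤ s → s ≤ t → y t - y s = ∫ r in s..t, y' r)
    (hy_int : IntegrableOn y (Set.Ioi 0))
    (hΛ_nonneg : ∀ t : ℝ, 0 ≤ t → 0 ≤ Λ t)
    (hΛ_int : IntegrableOn Λ (Set.Ioi 0))
    (hineq : ∀ᵐ t ∂volume, 0 ≤ t → y' t ≤ C + Λ t) :
    Filter.Tendsto y Filter.atTop (nhds 0) := by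
  rw [Metric.tendsto_atTop]
  intro ε hε
  set δ : ℝ := ε / (4 * (C + 1)) with hδdef
  have hC1 : (0:ℝ) < C + 1 := by linarith
  have hδ : 0 < δ := by positivity
  have hδeq : δ * (4 * (C + 1)) = ε := by
    rw [hδdef]; field_simp
  obtain ⟨T₁, hT₁0, hT₁⟩ := tail_small Λ hΛ_int (ε / 4) (by positivity)
  obtain ⟨T₂, hT₂0, hT₂⟩ := tail_small y hy_int (δ * (ε / 2)) (by positivity)
  refine ⟨max T₁ T₂ + δ, fun t ht => ?_⟩
  have hmax0 : (0:ℝ) ≤ max T₁ T₂ := le_trans hT₁0 (le_max_left _ _)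
  have htδ : max T₁ T₂ ≤ t - δ := by linarith
  have htδ0 : (0:ℝ) ≤ t - δ := le_trans hmax0 htδ
  have ht0 : (0:ℝ) ≤ t := by linarith
  rw [Real.dist_eq, sub_zero, abs_of_nonneg (hy_nonneg t ht0)]
  by_contra hcon
  push_neg at hcon
  -- y stays ≥ ε/2 on [t-δ, t]
  have key : ∀ s ∈ Set.Icc (t - δ) t, ε / 2 ≤ y s := by
    intro s hs
    have hs0 : 0 ≤ s := le_trans htδ0 hs.1
    have hst : s ≤ t := hs.2
    have hΛint2 : IntervalIntegrable Λ volume s t := by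
      rw [intervalIntegrable_iff]
      refine hΛ_int.mono_set ?_
      rw [Set.uIoc_of_le hst]
      exact fun x hx => lt_of_le_of_lt hs0 hx.1
    have hCΛint : IntervalIntegrable (fun r => C + Λ r) volume s t :=
      (_root_.intervalIntegrable_const).add hΛint2
    have h1 : y t - y s = ∫ r in s..t, y' r := hFTC s t hs0 hst
    have h2 : (∫ r in s..t, y' r) ≤ ∫ r in s..t, (C + Λ r) := by
      apply intervalIntegral.integral_mono_ae_restrict hst (hy'_int s t hs0 hst) hCΛint
      have hmem := ae_restrict_mem (μ := volume) (measurableSet_Icc (a := s) (b := t))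
      have hae : ∀ᵐ r ∂(volume.restrict (Set.Icc s t)), 0 ≤ r → y' r ≤ C + Λ r :=
        ae_restrict_of_ae hineq
      filter_upwards [hmem, hae] with r hr hr2
      exact hr2 (le_trans hs0 hr.1)
    have h3 : (∫ r in s..t, (C + Λ r)) = C * (t - s) + ∫ r in s..t, Λ r := by
      rw [intervalIntegral.integral_add _root_.intervalIntegrable_const hΛint2,
        intervalIntegral.integral_const, smul_eq_mul, mul_comm]
    have h4 : (∫ r in s..t, Λ r) < ε / 4 :=
      hT₁ s t (le_trans (le_max_left _ _) (le_trans htδ hs.1)) hst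
    have h5 : C * (t - s) ≤ ε / 4 := by
      have hts : t - s ≤ δ := by linarith [hs.1]
      have : C * (t - s) ≤ C * δ := by nlinarith
      nlinarith
    linarith
  -- lower bound on the integral of y over [t-δ, t]
  have hyint2 : IntervalIntegrable y volume (t - δ) t := by
    rw [intervalIntegrable_iff]
    refine hy_int.mono_set ?_
    rw [Set.uIoc_of_le (by linarith : t - δ ≤ t)]
    exact fun x hx => lt_of_le_of_lt htδ0 hx.1
  have lower : δ * (ε / 2) ≤ ∫ r in (t - δ)..t, y r := by
    have := intervalIntegral.integral_mono_on (by linarith : t - δ ≤ t)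
      _root_.intervalIntegrable_const hyint2 key
    rw [intervalIntegral.integral_const, smul_eq_mul] at this
    calc δ * (ε / 2) = (t - (t - δ)) * (ε / 2) := by ring_nf
      _ ≤ _ := this
  have upper : (∫ r in (t - δ)..t, y r) < δ * (ε / 2) :=
    hT₂ (t - δ) t (le_trans (le_max_right _ _) htδ) (by linarith)
  linarith
end

section
/- Let (X, dist) be a metric space, B ⊆ X a nonempty set, and let S(t) : B → B for t ≥ 0 be a semigroup of maps (S(0) = id and S(t+s) = S(t)∘S(s) for all t, s ≥ 0). Fix T > 0 and assume: (i) there is L ≥ 1 such that for every t ∈ [0,T] the map S(t) is Lipschitz on B with constant L; (ii) the map (t, b) ↦ S(t)b is continuous on [0,T] × B; (iii) there is a compact set M_d ⊆ B with S(T)(M_d) ⊆ M_d and constants C₀ ≥ 0, χ > 0 such that the Hausdorff semidistance satisfies dist(S(T)ⁿ(B), M_d) := sup_{b∈B} inf_{y∈M_d} dist(S(T)ⁿ b, y) ≤ C₀e^{−χn} for all n ∈ ℕ. Then the set M := ⋃_{t∈[0,T]} S(t)(M_d) is compact, satisfies S(t)(M) ⊆ M for all t ≥ 0, and there exist C′ ≥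 0 and τ > 0 such that dist(S(t)(B), M) ≤ C′e^{−τt} for all t ≥ 0 (one may take τ = χ/T and C′ = L C₀ e^{χ}). -/
open Set

/-- Passage from a discrete exponential attractor of the time-`T` map to an
exponentially attracting, compact, positively invariant set for the
continuous-time semigroup (formula (st) in the proof of Theorem 4.9). -/
theorem discrete_to_continuous_exponential_attractor
    {X : Type*} [MetricSpace X] (B : Set X) (hB : B.Nonempty)
    (S : ℝ → X → X)
    (hmaps : ∀ t : ℝ, 0 ≤ t → Set.MapsTo (S t) B B)
    (hid : ∀ b ∈ B, S 0 b = b)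
    (hsemi : ∀ t s : ℝ, 0 ≤ t → 0 ≤ s → ∀ b ∈ B, S (t + s) b = S t (S s b))
    (T : ℝ) (hT : 0 < T)
    (L : ℝ) (hL : 1 ≤ L)
    (hlip : ∀ t ∈ Set.Icc (0 : ℝ) T, ∀ b₁ ∈ B, ∀ b₂ ∈ B,
      dist (S t b₁) (S t b₂) ≤ L * dist b₁ b₂)
    (hcont : ContinuousOn (fun p : ℝ × X => S p.1 p.2) (Set.Icc (0 : ℝ) T ×ˢ B))
    (Md : Set X) (hMdB : Md ⊆ B) (hMdcomp : IsCompact Md)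
    (hMdinv : S T '' Md ⊆ Md)
    (C₀ χ : ℝ) (hC₀ : 0 ≤ C₀) (hχ : 0 < χ)
    (hattr : ∀ n : ℕ, ∀ b ∈ B,
      Metric.infDist ((S T)^[n] b) Md ≤ C₀ * Real.exp (-χ * n)) :
    IsCompact (⋃ t ∈ Set.Icc (0 : ℝ) T, S t '' Md)
    ∧ (∀ t : ℝ, 0 ≤ t →
        S t '' (⋃ t' ∈ Set.Icc (0 : ℝ) T, S t' '' Md) ⊆
          ⋃ t' ∈ Set.Icc (0 : ℝ) T, S t' '' Md)
    ∧ ∃ C' : ℝ, 0 ≤ C' ∧ ∃ τ : ℝ, 0 < τ ∧ ∀ t : ℝ, 0 ≤ t → ∀ b ∈ B,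
        Metric.infDist (S t b) (⋃ t' ∈ Set.Icc (0 : ℝ) T, S t' '' Md) ≤
          C' * Real.exp (-τ * t) := by
  have hTnn : (0:ℝ) ≤ T := hT.le
  -- iterates stay in B
  have hiterB : ∀ n : ℕ, ∀ b ∈ B, (S T)^[n] b ∈ B := by
    intro n
    induction n with
    | zero => intro b hb; simpa using hb
    | succ n ih =>
      intro b hb
      rw [Function.iterate_succ_apply]
      exact ih _ (hmaps T hTnn hb)
  -- iterates stay in Md
  have hiterMd : ∀ n : ℕ, ∀ m ∈ Md, (S T)^[n] m ∈ Md := by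
    intro n
    induction n with
    | zero => intro m hm; simpa using hm
    | succ n ih =>
      intro m hm
      rw [Function.iterate_succ_apply]
      exact ih _ (hMdinv ⟨m, hm, rfl⟩)
  -- semigroup decomposition
  have key : ∀ n : ℕ, ∀ r : ℝ, 0 ≤ r → ∀ b ∈ B,
      S (r + n * T) b = S r ((S T)^[n] b) := by
    intro n
    induction n with
    | zero => intro r hr b hb; simp
    | succ n ih =>
      intro r hr b hb
      have h1 : r + ((n : ℕ) + 1 : ℕ) * T = (r + n * T) + T := by push_cast; ring
      rw [h1, hsemi (r + n * T) T (by positivity) hTnn b hb,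
        ih r hr (S T b) (hmaps T hTnn hb), Function.iterate_succ_apply]
  -- time decomposition
  have decomp : ∀ s : ℝ, 0 ≤ s → ∃ n : ℕ, ∃ r : ℝ, r ∈ Set.Icc (0:ℝ) T ∧
      s = r + n * T ∧ s / T - 1 ≤ (n : ℝ) := by
    intro s hs
    have hsT : 0 ≤ s / T := div_nonneg hs hTnn
    refine ⟨⌊s / T⌋₊, s - ⌊s / T⌋₊ * T, ⟨?_, ?_⟩, by ring, ?_⟩
    · have : (⌊s / T⌋₊ : ℝ) ≤ s / T := Nat.floor_le hsT
      have := (le_div_iff₀ hT).1 this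
      linarith
    · have : s / T < ⌊s / T⌋₊ + 1 := Nat.lt_floor_add_one _
      have := (div_lt_iff₀ hT).1 this
      nlinarith
    · have : s / T < ⌊s / T⌋₊ + 1 := Nat.lt_floor_add_one _
      linarith
  set M := ⋃ t ∈ Set.Icc (0 : ℝ) T, S t '' Md with hM
  have hmemM : ∀ r ∈ Set.Icc (0:ℝ) T, ∀ m ∈ Md, S r m ∈ M := by
    intro r hr m hm
    exact mem_iUnion₂.2 ⟨r, hr, ⟨m, hm, rfl⟩⟩
  refine ⟨?_, ?_, ?_⟩
  · -- compactness
    have hMeq : M = (fun p : ℝ × X => S p.1 p.2) '' (Set.Icc (0:ℝ) T ×ˢ Md) := by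
      ext x
      simp only [hM, mem_iUnion, mem_image, Set.mem_prod, Prod.exists]
      constructor
      · rintro ⟨t, ht, m, hm, rfl⟩; exact ⟨t, m, ⟨ht, hm⟩, rfl⟩
      · rintro ⟨t, m, ⟨ht, hm⟩, rfl⟩; exact ⟨t, ht, m, hm, rfl⟩
    rw [hMeq]
    exact (isCompact_Icc.prod hMdcomp).image_of_continuousOn
      (hcont.mono (Set.prod_mono le_rfl hMdB))
  · -- positive invariance
    intro t ht x hx
    rcases hx with ⟨y, hy, rfl⟩
    rcases mem_iUnion₂.1 hy with ⟨t', ht', m, hm, rfl⟩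
    have hmB : m ∈ B := hMdB hm
    have hx' : S t (S t' m) = S (t + t') m := (hsemi t t' ht ht'.1 m hmB).symm
    obtain ⟨n, r, hr, heq, -⟩ := decomp (t + t') (by linarith [ht'.1])
    have : S (t + t') m = S r ((S T)^[n] m) := by rw [heq]; exact key n r hr.1 m hmB
    rw [hx', this]
    exact hmemM r hr _ (hiterMd n m hm)
  · -- exponential attraction
    refine ⟨L * C₀ * Real.exp χ, by positivity, χ / T, div_pos hχ hT, ?_⟩
    intro t ht b hb
    obtain ⟨n, r, hr, heq, hn⟩ := decomp t ht
    have hSt : S t b = S r ((S T)^[n] b) := by rw [heq]; exact key n r hr.1 b hb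
    have hbn : (S T)^[n] b ∈ B := hiterB n b hb
    have hexp : Real.exp (-χ * n) ≤ Real.exp χ * Real.exp (-(χ / T) * t) := by
      rw [← Real.exp_add]
      apply Real.exp_le_exp.2
      have h1 : χ * (t / T - 1) ≤ χ * n := mul_le_mul_of_nonneg_left hn hχ.le
      have h2 : (χ / T) * t = χ * (t / T) := by ring
      linarith [h1, h2]
    rcases Md.eq_empty_or_nonempty with hMd | hMd
    · have : M = ∅ := by
        simp only [hM, Set.iUnion_eq_empty]
        intro t' ; simp [hMd]
      rw [this, Metric.infDist_empty]
      positivity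
    · obtain ⟨y, hy, hdy⟩ := hMdcomp.exists_infDist_eq_dist hMd ((S T)^[n] b)
      have hyB : y ∈ B := hMdB hy
      have hle : Metric.infDist (S t b) M ≤ dist (S t b) (S r y) :=
        Metric.infDist_le_dist_of_mem (hmemM r hr y hy)
      have hlip' : dist (S t b) (S r y) ≤ L * dist ((S T)^[n] b) y := by
        rw [hSt]; exact hlip r hr _ hbn _ hyB
      have hattr' : dist ((S T)^[n] b) y ≤ C₀ * Real.exp (-χ * n) := by
        rw [← hdy]; exact hattr n b hb
      calc Metric.infDist (S t b) M ≤ L * dist ((S T)^[n] b) y := hle.trans hlip'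
        _ ≤ L * (C₀ * Real.exp (-χ * n)) :=
            mul_le_mul_of_nonneg_left hattr' (by linarith)
        _ ≤ L * (C₀ * (Real.exp χ * Real.exp (-(χ / T) * t))) := by
            apply mul_le_mul_of_nonneg_left _ (by linarith)
            exact mul_le_mul_of_nonneg_left hexp hC₀
        _ = L * C₀ * Real.exp χ * Real.exp (-(χ / T) * t) := by ring
end
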